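/- Soundness of match constraints: extend patterns with (p with x ⊑ p'), whose declarative rule is θ ⊢ (p with x ⊑ p') ≈ t iff θ ⊢ p ≈ t, θ(x) = t' for some t', and θ ⊢ p' ≈ t'. Extend the machine so that matching (p with x ⊑ p') against t continues with [match p t, backmatch(x, p')], where backmatch(x, p') looks up θ(x) = t' and continues with match p' t'. Then if the machine started from (∅, [], [match p t]) reaches success(θ), then θ ⊢ p ≈ t in the extended declarative semantics. -/

import Mathlib

namespace PyPM
/-- Terms over a signature of function symbols (names with lists of arguments). -/
inductive Tm where
  | app : String → List Tm → Tm


/-- Basic patterns: variables, function applications, and alternates. -/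
inductive Pat where
  | var : String → Pat
  | app : String → List Pat → Pat
  | alt : Pat → Pat → Pat
  | constr : Pat → String → Pat → Pat

/-- Substitutions: finite maps from variables to terms (modeled as partial functions). -/
abbrev Subst := String → Option Tm

def emptySubst : Subst := fun _ => none

def Subst.update (θ : Subst) (x : String) (t : Tm) : Subst :=
  fun y => if y = x then some t else θ y

/-- θ ⊆ θ' : every binding of θ is a binding of θ'. -/
def Subst.le (θ θ' : Subst) : Prop := ∀ x t, θ x = some t → θ' x = some t

/-- Declarative matching semantics: θ ⊢ p ≈ t. -/
inductive Matches : Subst → Pat → Tm → Prop where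
  | var {θ : Subst} {x : String} {t : Tm} :
      θ x = some t → Matches θ (.var x) t
  | app {θ : Subst} {f : String} {ps : List Pat} {ts : List Tm}
      (hlen : ps.length = ts.length)
      (hargs : ∀ i (h1 : i < ps.length) (h2 : i < ts.length), Matches θ ps[i] ts[i]) :
      Matches θ (.app f ps) (.app f ts)
  | alt1 {θ : Subst} {p p' : Pat} {t : Tm} :
      Matches θ p t → Matches θ (.alt p p') t
  | alt2 {θ : Subst} {p p' : Pat} {t : Tm} :
      Matches θ p' t → Matches θ (.alt p p') t
  | constr {θ : Subst} {p p' : Pat} {x : String} {t t' : Tm} :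
      Matches θ p t → θ x = some t' → Matches θ p' t' →
      Matches θ (.constr p x p') t

/-- Actions in the machine continuation. -/
inductive Action where
  | doMatch : Pat → Tm → Action
  | backmatch : String → Pat → Action

abbrev Cont := List Action
abbrev Frame := Subst × Cont
abbrev Stack := List Frame

/-- Machine states. -/
inductive St where
  | success : Subst → St
  | failure : St
  | running : Subst → Stack → Cont → St

/-- Backtracking: pop the stack, or fail if it is empty. -/
def backtrack : Stack → St
  | [] => .failure
  | (θ, k) :: stk => .running θ stk k

/-- The step relation of the algorithmic matching machine. -/
inductive Step : St → St → Prop where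
  | success {θ stk} :
      Step (.running θ stk []) (.success θ)
  | varBind {θ : Subst} {stk x t k} :
      θ x = none →
      Step (.running θ stk (.doMatch (.var x) t :: k)) (.running (θ.update x t) stk k)
  | varBound {θ : Subst} {stk x t k} :
      θ x = some t →
      Step (.running θ stk (.doMatch (.var x) t :: k)) (.running θ stk k)
  | varConflict {θ : Subst} {stk x t t' k} :
      θ x = some t' → t' ≠ t →
      Step (.running θ stk (.doMatch (.var x) t :: k)) (backtrack stk)
  | fn {θ stk f ps ts k} :
      ps.length = ts.length →
      Step (.running θ stk (.doMatch (.app f ps) (.app f ts) :: k))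
           (.running θ stk (((ps.zip ts).map fun pt => .doMatch pt.1 pt.2) ++ k))
  | fnConflict {θ stk f g ps ts k} :
      f ≠ g ∨ ps.length ≠ ts.length →
      Step (.running θ stk (.doMatch (.app f ps) (.app g ts) :: k)) (backtrack stk)
  | alt {θ stk p p' t k} :
      Step (.running θ stk (.doMatch (.alt p p') t :: k))
           (.running θ ((θ, .doMatch p' t :: k) :: stk) (.doMatch p t :: k))
  | matchConstr {θ stk p x p' t k} :
      Step (.running θ stk (.doMatch (.constr p x p') t :: k))
           (.running θ stk (.doMatch p t :: .backmatch x p' :: k))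
  | backmatch {θ : Subst} {stk x p' t' k} :
      θ x = some t' →
      Step (.running θ stk (.backmatch x p' :: k)) (.running θ stk (.doMatch p' t' :: k))

end PyPM

open PyPM

namespace PyPM

/-- Satisfaction of an action by a (final) substitution. -/
def Sat (θf : Subst) : Action → Prop
  | .doMatch p t => Matches θf p t
  | .backmatch x p' => ∃ t', θf x = some t' ∧ Matches θf p' t'

/-- A good frame: its substitution is below θf and all its actions are satisfied. -/
def GoodF (θf : Subst) (fr : Frame) : Prop :=
  Subst.le fr.1 θf ∧ ∀ a ∈ fr.2, Sat θf a

/-- Invariant for machine states. -/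
def Good (θf : Subst) : St → Prop
  | .running θ stk k => GoodF θf (θ, k) ∨ ∃ fr ∈ stk, GoodF θf fr
  | .success θ => θ = θf
  | .failure => False

lemma good_backtrack {θf : Subst} {stk : Stack} (h : Good θf (backtrack stk)) :
    ∃ fr ∈ stk, GoodF θf fr := by
  cases stk with
  | nil => exact absurd h (by simp [backtrack, Good])
  | cons fr rest =>
    obtain ⟨θ₁, k₁⟩ := fr
    simp only [backtrack, Good] at h
    rcases h with h | ⟨fr, hfr, hg⟩
    · exact ⟨(θ₁, k₁), List.mem_cons_self, h⟩
    · exact ⟨fr, List.mem_cons_of_mem _ hfr, hg⟩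

lemma step_good {θf : Subst} {s s' : St} (hs : Step s s') (h : Good θf s') :
    Good θf s := by
  cases hs with
  | success =>
    subst h
    exact Or.inl ⟨fun x t hx => hx, by simp⟩
  | @varBind θ stk x t k hx =>
    rcases h with ⟨hle, hsat⟩ | h
    · have hsat' : ∀ a ∈ k, Sat θf a := hsat
      have hle' : Subst.le (θ.update x t) θf := hle
      refine Or.inl ⟨fun y u hy => hle' y u ?_, ?_⟩
      · have hy' : θ y = some u := hy
        simp only [Subst.update]
        rcases eq_or_ne y x with rfl | hne
        · rw [hx] at hy'; exact absurd hy' (by simp)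
        · simp [hne, hy']
      · intro a ha
        rcases List.mem_cons.1 ha with rfl | ha
        · exact Matches.var (hle' x t (by simp [Subst.update]))
        · exact hsat' a ha
    · exact Or.inr h
  | @varBound θ stk x t k hx =>
    rcases h with ⟨hle, hsat⟩ | h
    · refine Or.inl ⟨hle, ?_⟩
      intro a ha
      rcases List.mem_cons.1 ha with rfl | ha
      · exact Matches.var (hle x t hx)
      · exact hsat a ha
    · exact Or.inr h
  | varConflict _ _ => exact Or.inr (good_backtrack h)
  | @fn θ stk f ps ts k hlen =>
    rcases h with ⟨hle, hsat⟩ | h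
    · refine Or.inl ⟨hle, ?_⟩
      intro a ha
      rcases List.mem_cons.1 ha with rfl | ha
      · refine Matches.app hlen ?_
        intro i h1 h2
        have hmem : Action.doMatch ps[i] ts[i] ∈
            (ps.zip ts).map fun pt => Action.doMatch pt.1 pt.2 := by
          refine List.mem_map.2 ⟨(ps[i], ts[i]), ?_, rfl⟩
          have hi : i < (ps.zip ts).length := by
            simp [List.length_zip, hlen, h2]
          have := List.getElem_mem hi
          simpa [List.getElem_zip] using this
        have := hsat _ (List.mem_append.2 (Or.inl hmem))
        exact this
      · exact hsat a (List.mem_append.2 (Or.inr ha))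
    · exact Or.inr h
  | fnConflict _ => exact Or.inr (good_backtrack h)
  | @alt θ stk p p' t k =>
    rcases h with ⟨hle, hsat⟩ | ⟨fr, hfr, hg⟩
    · refine Or.inl ⟨hle, ?_⟩
      intro a ha
      rcases List.mem_cons.1 ha with rfl | ha
      · exact Matches.alt1 (hsat _ (List.mem_cons_self))
      · exact hsat a (List.mem_cons_of_mem _ ha)
    · rcases List.mem_cons.1 hfr with rfl | hfr
      · obtain ⟨hle, hsat⟩ := hg
        refine Or.inl ⟨hle, ?_⟩
        intro a ha
        rcases List.mem_cons.1 ha with rfl | ha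
        · exact Matches.alt2 (hsat _ (List.mem_cons_self))
        · exact hsat a (List.mem_cons_of_mem _ ha)
      · exact Or.inr ⟨fr, hfr, hg⟩
  | @matchConstr θ stk p x p' t k =>
    rcases h with ⟨hle, hsat⟩ | h
    · refine Or.inl ⟨hle, ?_⟩
      intro a ha
      rcases List.mem_cons.1 ha with rfl | ha
      · have h1 : Sat θf (.doMatch p t) := hsat _ (List.mem_cons_self)
        have h2 : Sat θf (.backmatch x p') :=
          hsat _ (List.mem_cons_of_mem _ (List.mem_cons_self))
        obtain ⟨t', hx, hm⟩ := h2
        exact Matches.constr h1 hx hm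
      · exact hsat a (List.mem_cons_of_mem _ (List.mem_cons_of_mem _ ha))
    · exact Or.inr h
  | @backmatch θ stk x p' t' k hx =>
    rcases h with ⟨hle, hsat⟩ | h
    · refine Or.inl ⟨hle, ?_⟩
      intro a ha
      rcases List.mem_cons.1 ha with rfl | ha
      · exact ⟨t', hle x t' hx, hsat _ (List.mem_cons_self)⟩
      · exact hsat a (List.mem_cons_of_mem _ ha)
    · exact Or.inr h

lemma transGen_good {θf : Subst} {s : St}
    (h : Relation.TransGen Step s (.success θf)) : Good θf s := by
  induction h using Relation.TransGen.head_induction_on with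
  | single hs => exact step_good hs rfl
  | head hs _ ihg => exact step_good hs ihg

end PyPM

/-- Soundness of the machine extended with match constraints (success case). -/
theorem matchconstr_soundness_success {p : Pat} {t : Tm} {θ : Subst}
    (h : Relation.TransGen Step (.running emptySubst [] [.doMatch p t]) (.success θ)) :
    Matches θ p t := by
  have hg := transGen_good h
  rcases hg with ⟨_, hsat⟩ | ⟨fr, hfr, _⟩
  · exact hsat _ (List.mem_cons_self)
  · exact absurd hfr List.not_mem_nil
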